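/- For every z > 0, the function g_z is monotonically increasing on (−∞, 0) and monotonically decreasing on (z, ∞). -/

import Mathlib

noncomputable section

open Real MeasureTheory Set Filter

set_option maxHeartbeats 1000000

/-- The standard normal cumulative distribution function
`Φ(w) = ∫_{-∞}^w (1/√(2π)) e^{-t²/2} dt`. -/
def Phi (w : ℝ) : ℝ :=
  ∫ t in Set.Iic w, (1 / Real.sqrt (2 * Real.pi)) * Real.exp (-t ^ 2 / 2)

/-- The function `g_z = (w f_z(w))'` where `f_z` is the bounded solution of the Stein
equation for the indicator of `(-∞, z]`. -/
def gz (z w : ℝ) : ℝ :=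
  if z < w then
    (Real.sqrt (2 * Real.pi) * (1 + w ^ 2) * Real.exp (w ^ 2 / 2) * (1 - Phi w) - w) * Phi z
  else
    (Real.sqrt (2 * Real.pi) * (1 + w ^ 2) * Real.exp (w ^ 2 / 2) * Phi w + w) * (1 - Phi z)


def phiF (x : ℝ) : ℝ := (1 / Real.sqrt (2 * Real.pi)) * Real.exp (-x ^ 2 / 2)

lemma sqrt_two_pi_pos : 0 < Real.sqrt (2 * Real.pi) :=
  Real.sqrt_pos.2 (by positivity)

lemma phiF_pos (x : ℝ) : 0 < phiF x := by
  unfold phiF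
  have := sqrt_two_pi_pos
  positivity

lemma continuous_phiF : Continuous phiF := by
  unfold phiF; fun_prop

lemma integrable_phiF : Integrable phiF := by
  have h : Integrable fun x : ℝ => Real.exp (-(1/2) * x ^ 2) :=
    integrable_exp_neg_mul_sq (by norm_num)
  have h2 := (h.const_mul (1 / Real.sqrt (2 * Real.pi)))
  have he : (fun x : ℝ => 1 / Real.sqrt (2 * Real.pi) * Real.exp (-(1/2) * x ^ 2)) = phiF := by
    funext x; unfold phiF; congr 1; ring
  rwa [he] at h2

lemma integral_phiF : ∫ x, phiF x = 1 := by
  have h : ∫ x : ℝ, Real.exp (-(1/2) * x ^ 2) = Real.sqrt (Real.pi / (1/2)) :=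
    integral_gaussian (1/2)
  have h2 : ∫ x, phiF x = (1 / Real.sqrt (2 * Real.pi)) * ∫ x : ℝ, Real.exp (-(1/2) * x ^ 2) := by
    rw [← integral_const_mul]
    congr 1; funext x; unfold phiF; congr 1; ring_nf
  rw [h2, h]
  have : Real.pi / (1/2) = 2 * Real.pi := by ring
  rw [this, one_div, inv_mul_cancel₀ sqrt_two_pi_pos.ne']

lemma Phi_eq (x : ℝ) : Phi x = Phi 0 + ∫ t in (0:ℝ)..x, phiF t := by
  have := intervalIntegral.integral_Iic_sub_Iic (μ := volume) (f := phiF)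
    (integrable_phiF.integrableOn) (integrable_phiF.integrableOn) (a := 0) (b := x)
  have hP : ∀ y : ℝ, Phi y = ∫ t in Set.Iic y, phiF t := fun y => rfl
  rw [hP, hP 0]
  linarith [this]

lemma hasDerivAt_Phi (x : ℝ) : HasDerivAt Phi (phiF x) x := by
  have h : HasDerivAt (fun u => ∫ t in (0:ℝ)..u, phiF t) (phiF x) x :=
    intervalIntegral.integral_hasDerivAt_right
      (integrable_phiF.intervalIntegrable)
      (continuous_phiF.stronglyMeasurableAtFilter _ _)
      continuous_phiF.continuousAt
  have : Phi = fun u => Phi 0 + ∫ t in (0:ℝ)..u, phiF t := funext Phi_eq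
  rw [this]
  exact h.const_add _

lemma Phi_pos (x : ℝ) : 0 < Phi x := by
  have h1 : Phi x = Phi (x-1) + ∫ t in (x-1)..x, phiF t := by
    rw [Phi_eq, Phi_eq (x-1)]
    have := intervalIntegral.integral_add_adjacent_intervals
      (a := (0:ℝ)) (b := x-1) (c := x)
      (integrable_phiF.intervalIntegrable) (integrable_phiF.intervalIntegrable)
    linarith
  have h2 : (0:ℝ) ≤ Phi (x-1) :=
    setIntegral_nonneg measurableSet_Iic (fun t _ => (phiF_pos t).le)
  have h3 : 0 < ∫ t in (x-1)..x, phiF t :=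
    intervalIntegral.intervalIntegral_pos_of_pos
      (integrable_phiF.intervalIntegrable) (fun t => phiF_pos t) (by linarith)
  linarith

lemma Phi_neg (x : ℝ) : Phi (-x) = 1 - Phi x := by
  have h1 : Phi (-x) = ∫ t in Set.Iic (-x), phiF (-t) := by
    unfold Phi phiF
    congr 1; funext t; congr 1; ring_nf
  rw [h1, integral_comp_neg_Iic, neg_neg]
  have h2 : (∫ t in Set.Iic x, phiF t) + (∫ t in Set.Ioi x, phiF t) = ∫ t, phiF t :=
    intervalIntegral.integral_Iic_add_Ioi integrable_phiF.integrableOn integrable_phiF.integrableOn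
  rw [integral_phiF] at h2
  have hP : Phi x = ∫ t in Set.Iic x, phiF t := rfl
  linarith

lemma Phi_lt_one (x : ℝ) : Phi x < 1 := by
  have := Phi_pos (-x)
  rw [Phi_neg] at this
  linarith

lemma Phi_tendsto_one : Tendsto Phi atTop (nhds 1) := by
  have h : Tendsto (fun x : ℝ => ∫ t in (0:ℝ)..x, phiF t) atTop
      (nhds (∫ t in Set.Ioi (0:ℝ), phiF t)) :=
    MeasureTheory.intervalIntegral_tendsto_integral_Ioi 0 integrable_phiF.integrableOn tendsto_id
  have h2 : (∫ t in Set.Iic (0:ℝ), phiF t) + (∫ t in Set.Ioi (0:ℝ), phiF t) = 1 := by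
    rw [intervalIntegral.integral_Iic_add_Ioi integrable_phiF.integrableOn
      integrable_phiF.integrableOn, integral_phiF]
  have hP : Phi 0 = ∫ t in Set.Iic (0:ℝ), phiF t := rfl
  have := h.const_add (Phi 0)
  simp only [← Phi_eq] at this
  convert this using 2
  rw [hP]; linarith

lemma hasDerivAt_phiF (x : ℝ) : HasDerivAt phiF (-x * phiF x) x := by
  have h1 : HasDerivAt (fun y : ℝ => -y ^ 2 / 2) (-x) x := by
    have := ((hasDerivAt_pow 2 x).neg.div_const 2)
    refine this.congr_deriv ?_
    simp; ring
  have h2 := (h1.exp.const_mul (1 / Real.sqrt (2 * Real.pi)))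
  have he : phiF = fun y : ℝ => 1 / Real.sqrt (2 * Real.pi) * Real.exp (-y ^ 2 / 2) := rfl
  rw [he]
  refine h2.congr_deriv ?_
  simp only [phiF]; ring

def mills (x : ℝ) : ℝ := (x ^ 2 + 2) / (x ^ 3 + 3 * x) * phiF x - (1 - Phi x)

lemma hasDerivAt_mills {x : ℝ} (hx : 0 < x) :
    HasDerivAt mills (-6 * phiF x / (x ^ 3 + 3 * x) ^ 2) x := by
  have hne : x ^ 3 + 3 * x ≠ 0 := by positivity
  have ha : HasDerivAt (fun y : ℝ => y ^ 2 + 2) (2 * x) x := by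
    simpa using (hasDerivAt_pow 2 x).add_const 2
  have hb : HasDerivAt (fun y : ℝ => y ^ 3 + 3 * y) (3 * x ^ 2 + 3) x := by
    have := (hasDerivAt_pow 3 x).add ((hasDerivAt_id x).const_mul 3)
    refine this.congr_deriv ?_
    ring
  have hq := ha.div hb hne
  have hprod := hq.mul (hasDerivAt_phiF x)
  have hPhi := (hasDerivAt_Phi x)
  have hfull := hprod.sub ((hasDerivAt_const x 1).sub hPhi)
  refine hfull.congr_deriv ?_
  simp only [Pi.div_apply]
  have hPhiF := (phiF_pos x).ne'
  field_simp
  ring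

lemma mills_tendsto : Tendsto mills atTop (nhds 0) := by
  have h1 : Tendsto (fun x : ℝ => (x ^ 2 + 2) / (x ^ 3 + 3 * x) * phiF x) atTop (nhds 0) := by
    have hub : ∀ᶠ x : ℝ in atTop,
        (x ^ 2 + 2) / (x ^ 3 + 3 * x) * phiF x ≤ (2 / Real.sqrt (2 * Real.pi)) / x := by
      filter_upwards [eventually_ge_atTop (2:ℝ)] with x hx
      have hx0 : (0:ℝ) < x := by linarith
      have hd : (0:ℝ) < x ^ 3 + 3 * x := by positivity
      have hexp : Real.exp (-x ^ 2 / 2) ≤ 1 := by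
        rw [Real.exp_le_one_iff]; nlinarith
      have hphi : phiF x ≤ 1 / Real.sqrt (2 * Real.pi) := by
        unfold phiF
        calc 1 / Real.sqrt (2 * Real.pi) * Real.exp (-x ^ 2 / 2)
            ≤ 1 / Real.sqrt (2 * Real.pi) * 1 := by
              exact mul_le_mul_of_nonneg_left hexp (by positivity)
          _ = 1 / Real.sqrt (2 * Real.pi) := by ring
      have hr : (x ^ 2 + 2) / (x ^ 3 + 3 * x) ≤ 2 / x := by
        rw [div_le_div_iff₀ hd hx0]
        nlinarith
      calc (x ^ 2 + 2) / (x ^ 3 + 3 * x) * phiF x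
          ≤ (2 / x) * (1 / Real.sqrt (2 * Real.pi)) := by
            apply mul_le_mul hr hphi (phiF_pos x).le (by positivity)
        _ = (2 / Real.sqrt (2 * Real.pi)) / x := by ring
    have hlb : ∀ᶠ x : ℝ in atTop, 0 ≤ (x ^ 2 + 2) / (x ^ 3 + 3 * x) * phiF x := by
      filter_upwards [eventually_gt_atTop (0:ℝ)] with x hx
      have hd : (0:ℝ) < x ^ 3 + 3 * x := by have := pow_pos hx 3; linarith
      exact mul_nonneg (div_nonneg (by nlinarith) hd.le) (phiF_pos x).le
    have hlim : Tendsto (fun x : ℝ => (2 / Real.sqrt (2 * Real.pi)) / x) atTop (nhds 0) :=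
      Tendsto.div_atTop tendsto_const_nhds tendsto_id
    exact squeeze_zero' hlb hub hlim
  have h2 : Tendsto (fun x : ℝ => 1 - Phi x) atTop (nhds (1 - 1)) :=
    Tendsto.sub tendsto_const_nhds Phi_tendsto_one
  norm_num at h2
  have := h1.sub h2
  exact (by simpa using this : Tendsto (fun x : ℝ => (x ^ 2 + 2) / (x ^ 3 + 3 * x) * phiF x - (1 - Phi x)) atTop (nhds 0))

lemma mills_anti : StrictAntiOn mills (Set.Ioi 0) := by
  apply strictAntiOn_of_deriv_neg (convex_Ioi 0)
  · exact fun x hx => (hasDerivAt_mills hx).continuousAt.continuousWithinAt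
  · intro x hx
    rw [interior_Ioi] at hx
    rw [(hasDerivAt_mills hx).deriv]
    rw [Set.mem_Ioi] at hx
    have h1 : (0:ℝ) < x ^ 3 + 3 * x := by have := pow_pos hx 3; linarith
    apply div_neg_of_neg_of_pos
    · nlinarith [phiF_pos x]
    · positivity

lemma mills_pos {x : ℝ} (hx : 0 < x) : 0 < mills x := by
  have h1 : mills (x + 1) < mills x :=
    mills_anti hx (by simp; linarith) (by linarith)
  have h2 : 0 ≤ mills (x + 1) := by
    refine le_of_tendsto mills_tendsto ?_
    filter_upwards [eventually_gt_atTop (x+1)] with y hy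
    exact (mills_anti (show x+1 ∈ Set.Ioi (0:ℝ) by simp; linarith)
      (show y ∈ Set.Ioi (0:ℝ) by simp; linarith) hy).le
  linarith

lemma mills_ineq {x : ℝ} (hx : 0 < x) :
    Real.sqrt (2 * Real.pi) * x * (3 + x ^ 2) * Real.exp (x ^ 2 / 2) * (1 - Phi x) < x ^ 2 + 2 := by
  have h := mills_pos hx
  unfold mills at h
  have hlt : 1 - Phi x < (x ^ 2 + 2) / (x ^ 3 + 3 * x) * phiF x := by linarith
  have hM : (0:ℝ) < Real.sqrt (2 * Real.pi) * x * (3 + x ^ 2) * Real.exp (x ^ 2 / 2) := by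
    have := sqrt_two_pi_pos; positivity
  have hkey : Real.sqrt (2 * Real.pi) * x * (3 + x ^ 2) * Real.exp (x ^ 2 / 2) *
      ((x ^ 2 + 2) / (x ^ 3 + 3 * x) * phiF x) = x ^ 2 + 2 := by
    unfold phiF
    rw [show (-x ^ 2 / 2 : ℝ) = -(x ^ 2 / 2) by ring, Real.exp_neg]
    have h1 : x ^ 3 + 3 * x ≠ 0 := by positivity
    have h2 : Real.exp (x ^ 2 / 2) ≠ 0 := Real.exp_ne_zero _
    have h3 : Real.sqrt (2 * Real.pi) ≠ 0 := sqrt_two_pi_pos.ne'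
    field_simp
    ring
  calc Real.sqrt (2 * Real.pi) * x * (3 + x ^ 2) * Real.exp (x ^ 2 / 2) * (1 - Phi x)
      < Real.sqrt (2 * Real.pi) * x * (3 + x ^ 2) * Real.exp (x ^ 2 / 2) *
        ((x ^ 2 + 2) / (x ^ 3 + 3 * x) * phiF x) := by
        exact mul_lt_mul_of_pos_left hlt hM
    _ = x ^ 2 + 2 := hkey

/-- derivative of the lower branch core `h w = √(2π)(1+w²)e^{w²/2}Φ(w) + w` -/
lemma hasDerivAt_hlow (w : ℝ) :
    HasDerivAt (fun w => Real.sqrt (2 * Real.pi) * (1 + w ^ 2) * Real.exp (w ^ 2 / 2) * Phi w + w)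
      (Real.sqrt (2 * Real.pi) * w * (3 + w ^ 2) * Real.exp (w ^ 2 / 2) * Phi w + (w ^ 2 + 2)) w := by
  have hsq : HasDerivAt (fun y : ℝ => y ^ 2 / 2) w w := by
    have := (hasDerivAt_pow 2 w).div_const 2
    refine this.congr_deriv ?_; simp; try ring
  have hexp := hsq.exp
  have hpoly : HasDerivAt (fun y : ℝ => Real.sqrt (2 * Real.pi) * (1 + y ^ 2))
      (Real.sqrt (2 * Real.pi) * (2 * w)) w := by
    have := ((hasDerivAt_pow 2 w).const_add 1).const_mul (Real.sqrt (2 * Real.pi))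
    refine this.congr_deriv ?_; simp; try ring
  have h1 := (hpoly.mul hexp).mul (hasDerivAt_Phi w)
  have h2 := h1.add (hasDerivAt_id w)
  refine h2.congr_deriv ?_
  simp only [Pi.mul_apply]
  have hs : Real.sqrt (2 * Real.pi) * phiF w * Real.exp (w ^ 2 / 2) = 1 := by
    unfold phiF
    rw [show (-w ^ 2 / 2 : ℝ) = -(w ^ 2 / 2) by ring, Real.exp_neg]
    field_simp
  have h2' : Real.sqrt (2 * Real.pi) * (1 + w ^ 2) * Real.exp (w ^ 2 / 2) * phiF w = 1 + w ^ 2 := by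
    nlinarith [hs]
  nlinarith [h2', hs]

/-- derivative of the upper branch core `k w = √(2π)(1+w²)e^{w²/2}(1-Φ(w)) - w` -/
lemma hasDerivAt_kup (w : ℝ) :
    HasDerivAt (fun w => Real.sqrt (2 * Real.pi) * (1 + w ^ 2) * Real.exp (w ^ 2 / 2) * (1 - Phi w) - w)
      (Real.sqrt (2 * Real.pi) * w * (3 + w ^ 2) * Real.exp (w ^ 2 / 2) * (1 - Phi w) - (w ^ 2 + 2)) w := by
  have hsq : HasDerivAt (fun y : ℝ => y ^ 2 / 2) w w := by
    have := (hasDerivAt_pow 2 w).div_const 2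
    refine this.congr_deriv ?_; simp; try ring
  have hexp := hsq.exp
  have hpoly : HasDerivAt (fun y : ℝ => Real.sqrt (2 * Real.pi) * (1 + y ^ 2))
      (Real.sqrt (2 * Real.pi) * (2 * w)) w := by
    have := ((hasDerivAt_pow 2 w).const_add 1).const_mul (Real.sqrt (2 * Real.pi))
    refine this.congr_deriv ?_; simp; try ring
  have hone : HasDerivAt (fun y : ℝ => 1 - Phi y) (-phiF w) w := by
    simpa using ((hasDerivAt_Phi w).const_sub 1)
  have h1 := (hpoly.mul hexp).mul hone
  have h2 := h1.sub (hasDerivAt_id w)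
  refine h2.congr_deriv ?_
  simp only [Pi.mul_apply]
  have hs : Real.sqrt (2 * Real.pi) * phiF w * Real.exp (w ^ 2 / 2) = 1 := by
    unfold phiF
    rw [show (-w ^ 2 / 2 : ℝ) = -(w ^ 2 / 2) by ring, Real.exp_neg]
    field_simp
  nlinarith [hs]

/-- For every `z > 0`, `g_z` is increasing on `(-∞, 0)` and decreasing on `(z, ∞)`. -/
theorem gz_monotone (z : ℝ) (hz : 0 < z) :
    MonotoneOn (gz z) (Set.Iio 0) ∧ AntitoneOn (gz z) (Set.Ioi z) := by
  have hPz : 0 < Phi z := Phi_pos z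
  have hPz1 : Phi z < 1 := Phi_lt_one z
  constructor
  · -- monotone on Iio 0
    set gLow : ℝ → ℝ := fun w =>
      (Real.sqrt (2 * Real.pi) * (1 + w ^ 2) * Real.exp (w ^ 2 / 2) * Phi w + w) * (1 - Phi z)
      with hgLow
    have hder : ∀ w : ℝ, HasDerivAt gLow
        ((Real.sqrt (2 * Real.pi) * w * (3 + w ^ 2) * Real.exp (w ^ 2 / 2) * Phi w + (w ^ 2 + 2))
          * (1 - Phi z)) w := fun w => (hasDerivAt_hlow w).mul_const _
    have heq : Set.EqOn (gz z) gLow (Set.Iio z) := by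
      intro w hw
      rw [Set.mem_Iio] at hw
      unfold gz
      rw [if_neg (by linarith)]
    have hgd : ∀ w ∈ Set.Iio z, HasDerivAt (gz z)
        ((Real.sqrt (2 * Real.pi) * w * (3 + w ^ 2) * Real.exp (w ^ 2 / 2) * Phi w + (w ^ 2 + 2))
          * (1 - Phi z)) w := by
      intro w hw
      refine (hder w).congr_of_eventuallyEq ?_
      filter_upwards [isOpen_Iio.mem_nhds hw] with y hy
      exact heq hy
    have hsub : Set.Iio (0:ℝ) ⊆ Set.Iio z := fun w hw => by
      rw [Set.mem_Iio] at *; linarith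
    refine (strictMonoOn_of_deriv_pos (convex_Iio 0) ?_ ?_).monotoneOn
    · exact fun w hw => (hgd w (hsub hw)).continuousAt.continuousWithinAt
    · intro w hw
      rw [interior_Iio, Set.mem_Iio] at hw
      rw [(hgd w (by rw [Set.mem_Iio]; linarith)).deriv]
      have hx : 0 < -w := by linarith
      have h := mills_ineq hx
      rw [show ((-w) ^ 2 : ℝ) = w ^ 2 by ring] at h
      have hPw : Phi w = 1 - Phi (-w) := by rw [← Phi_neg (-w), neg_neg]
      rw [← hPw] at h
      have hre : Real.sqrt (2 * Real.pi) * -w * (3 + w ^ 2) * Real.exp (w ^ 2 / 2) * Phi w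
          = -(Real.sqrt (2 * Real.pi) * w * (3 + w ^ 2) * Real.exp (w ^ 2 / 2) * Phi w) := by
        ring
      rw [hre] at h
      have hcore : 0 < Real.sqrt (2 * Real.pi) * w * (3 + w ^ 2) * Real.exp (w ^ 2 / 2) * Phi w
          + (w ^ 2 + 2) := by linarith
      exact mul_pos hcore (by linarith)
  · -- antitone on Ioi z
    set gUp : ℝ → ℝ := fun w =>
      (Real.sqrt (2 * Real.pi) * (1 + w ^ 2) * Real.exp (w ^ 2 / 2) * (1 - Phi w) - w) * Phi z
      with hgUp
    have hder : ∀ w : ℝ, HasDerivAt gUp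
        ((Real.sqrt (2 * Real.pi) * w * (3 + w ^ 2) * Real.exp (w ^ 2 / 2) * (1 - Phi w)
          - (w ^ 2 + 2)) * Phi z) w := fun w => (hasDerivAt_kup w).mul_const _
    have heq : Set.EqOn (gz z) gUp (Set.Ioi z) := by
      intro w hw
      rw [Set.mem_Ioi] at hw
      unfold gz
      rw [if_pos hw]
    have hgd : ∀ w ∈ Set.Ioi z, HasDerivAt (gz z)
        ((Real.sqrt (2 * Real.pi) * w * (3 + w ^ 2) * Real.exp (w ^ 2 / 2) * (1 - Phi w)
          - (w ^ 2 + 2)) * Phi z) w := by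
      intro w hw
      refine (hder w).congr_of_eventuallyEq ?_
      filter_upwards [isOpen_Ioi.mem_nhds hw] with y hy
      exact heq hy
    refine (strictAntiOn_of_deriv_neg (convex_Ioi z) ?_ ?_).antitoneOn
    · exact fun w hw => (hgd w hw).continuousAt.continuousWithinAt
    · intro w hw
      rw [interior_Ioi, Set.mem_Ioi] at hw
      rw [(hgd w (by rw [Set.mem_Ioi]; linarith)).deriv]
      have h := mills_ineq (show (0:ℝ) < w by linarith)
      exact mul_neg_of_neg_of_pos (by linarith) hPz
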